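/- Let t ≥ 2, q ≥ 1, d ≥ 1 be integers and let z_1,…,z_q be real numbers (not necessarily distinct) such that (1/q) ∑_{i=1}^q z_i^k = a_k for every k = 0,1,…,t, where a_k = π^{−1/2} ∫_ℝ ω^k e^{−ω²} dω is the k-th Gaussian moment. Let r_1,…,r_N ∈ {1,…,q}^d be the rows of an orthogonal array of strength t: for every t distinct coordinate indices i_1,…,i_t and every (v_1,…,v_t) ∈ {1,…,q}^t, exactly N/q^t of the rows r_j satisfy r_j(i_s) = v_s for all s. Then for every real polynomial f in d variables of total degree at most t, (1/N) ∑_{j=1}^N f(z_{r_j(1)},…,z_{r_j(d)}) = ∫_{ℝ^d} f dγ_d; that is, the N points (z_{r_j(1)},…,z_{r_j(d)}), counted with multiplicity and with equal weights 1/N, form a Gaussian t-design in ℝ^d. -/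

import Mathlib

open Real MeasureTheory Finset

lemma int1d (k : ℕ) : Integrable fun x : ℝ => x ^ k * Real.exp (-x ^ 2) := by
  have h0 : (fun x : ℝ => x ^ (k : ℝ) * Real.exp (-1 * x ^ 2))
      =ᵐ[volume.restrict (Set.Ioi (0:ℝ))] fun x : ℝ => x ^ k * Real.exp (-x ^ 2) := by
    filter_upwards [ae_restrict_mem measurableSet_Ioi] with x hx
    rw [Real.rpow_natCast, neg_one_mul]
  have h : IntegrableOn (fun x : ℝ => x ^ k * Real.exp (-x ^ 2)) (Set.Ioi 0) :=
    (integrableOn_rpow_mul_exp_neg_mul_sq one_pos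
      (by exact_mod_cast neg_one_lt_zero.trans_le (Nat.cast_nonneg k) : (-1:ℝ) < (k:ℝ))).congr_fun_ae h0
  rw [← integrableOn_univ, ← Set.Iio_union_Ici (a := (0:ℝ)), integrableOn_union,
    integrableOn_Ici_iff_integrableOn_Ioi]
  refine ⟨?_, h⟩
  rw [← (Measure.measurePreserving_neg (volume : Measure ℝ)).integrableOn_comp_preimage
      (Homeomorph.neg ℝ).measurableEmbedding]
  have hpre : (Neg.neg ⁻¹' Set.Iio (0:ℝ)) = Set.Ioi 0 := by
    ext x; simp
  rw [hpre]
  have e : ((fun x : ℝ => x ^ k * Real.exp (-x ^ 2)) ∘ Neg.neg)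
      = fun x : ℝ => (-1 : ℝ) ^ k * (x ^ k * Real.exp (-x ^ 2)) := by
    funext x; simp only [Function.comp_apply, neg_sq]; ring
  rw [e]
  exact h.const_mul _

theorem stmt15 (t q d N : ℕ) (ht : 2 ≤ t) (hq : 0 < q) (hd : 0 < d) (htd : t ≤ d)
    (hN : 0 < N) (z : Fin q → ℝ)
    (hz : ∀ k ≤ t, (1 / (q : ℝ)) * ∑ i, z i ^ k
      = Real.pi ^ (-(1 : ℝ) / 2) * ∫ ω : ℝ, ω ^ k * Real.exp (-ω ^ 2))
    (r : Fin N → Fin d → Fin q)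
    (hOA : ∀ (i : Fin t ↪ Fin d) (v : Fin t → Fin q),
      (Finset.univ.filter fun j : Fin N => ∀ s, r j (i s) = v s).card * q ^ t = N)
    (f : MvPolynomial (Fin d) ℝ) (hf : f.totalDegree ≤ t) :
    (1 / (N : ℝ)) * ∑ j, MvPolynomial.eval (fun i => z (r j i)) f
      = ∫ x : Fin d → ℝ, MvPolynomial.eval x f *
          (Real.pi ^ (-(d : ℝ) / 2) * Real.exp (-∑ i, x i ^ 2)) := by
  have hq' : (q : ℝ) ≠ 0 := Nat.cast_ne_zero.mpr hq.ne'
  have hN' : (N : ℝ) ≠ 0 := Nat.cast_ne_zero.mpr hN.ne'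
  set A : ℕ → ℝ := fun k => Real.pi ^ (-(1 : ℝ) / 2) * ∫ ω : ℝ, ω ^ k * Real.exp (-ω ^ 2)
    with hA
  set g : ℕ → ℝ → ℝ := fun k x => x ^ k * (Real.pi ^ (-(1 : ℝ) / 2) * Real.exp (-x ^ 2))
    with hg
  have hgint : ∀ k, Integrable (g k) := by
    intro k
    have := (int1d k).const_mul (Real.pi ^ (-(1 : ℝ) / 2))
    refine this.congr (Filter.Eventually.of_forall fun x => ?_)
    simp only [hg]; ring
  have hgA : ∀ k, (∫ x : ℝ, g k x) = A k := by
    intro k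
    show (∫ x : ℝ, x ^ k * (Real.pi ^ (-(1:ℝ)/2) * Real.exp (-x^2)))
      = Real.pi ^ (-(1:ℝ)/2) * ∫ ω : ℝ, ω ^ k * Real.exp (-ω^2)
    rw [← integral_const_mul]
    congr 1; funext x; ring
  have hA0 : A 0 = 1 := by
    rw [show A 0 = Real.pi ^ (-(1:ℝ)/2) * ∫ ω : ℝ, ω ^ 0 * Real.exp (-ω^2) from rfl,
      ← hz 0 (Nat.zero_le _)]
    simp only [pow_zero, Finset.sum_const, card_univ, Fintype.card_fin, nsmul_eq_mul, mul_one]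
    field_simp
  have hmom : ∀ k ≤ t, ∑ i, z i ^ k = q * A k := by
    intro k hk
    have h := hz k hk
    show ∑ i, z i ^ k = q * (Real.pi ^ (-(1:ℝ)/2) * ∫ ω : ℝ, ω ^ k * Real.exp (-ω^2))
    rw [← h]
    field_simp
  have hdens : ∀ x : Fin d → ℝ, (Real.pi ^ (-(d : ℝ) / 2) * Real.exp (-∑ i, x i ^ 2))
      = ∏ i : Fin d, (Real.pi ^ (-(1 : ℝ) / 2) * Real.exp (-(x i) ^ 2)) := by
    intro x
    rw [Finset.prod_mul_distrib, Finset.prod_const, Finset.card_univ, Fintype.card_fin,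
      ← Real.exp_sum]
    congr 1
    · rw [← Real.rpow_natCast (Real.pi ^ (-(1:ℝ)/2)) d, ← Real.rpow_mul Real.pi_pos.le]
      congr 1; push_cast; ring
    · congr 1
      simp
  -- key monomial identity
  have key : ∀ m ∈ f.support, (∑ j : Fin N, ∏ i : Fin d, z (r j i) ^ m i)
      = N * ∏ i : Fin d, A (m i) := by
    intro m hm
    have hmsum : (m.sum fun _ e => e) ≤ t := le_trans (MvPolynomial.le_totalDegree hm) hf
    have hms : ∀ i, m i ≤ t := by
      intro i
      refine le_trans ?_ hmsum
      by_cases h : i ∈ m.support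
      · exact Finset.single_le_sum (fun j _ => Nat.zero_le _) h
      · simp [Finsupp.notMem_support_iff.mp h]
    have hcard : m.support.card ≤ t := by
      calc m.support.card = ∑ i ∈ m.support, 1 := by simp
        _ ≤ ∑ i ∈ m.support, m i :=
            Finset.sum_le_sum fun i hi =>
              Nat.one_le_iff_ne_zero.mpr (Finsupp.mem_support_iff.mp hi)
        _ ≤ t := hmsum
    obtain ⟨S, hsub, -, hScard⟩ := Finset.exists_subsuperset_card_eq
      (Finset.subset_univ m.support) hcard (by simpa using htd)
    set e0 : Fin t ≃ S := (S.equivFinOfCardEq hScard).symm with he0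
    set e : Fin t ↪ Fin d := e0.toEmbedding.trans (Function.Embedding.subtype _) with he
    have hm0 : ∀ i ∉ S, m i = 0 := fun i hi =>
      Finsupp.notMem_support_iff.mp fun h => hi (hsub h)
    have hprodS : ∀ (F : Fin d → ℝ), (∀ i, m i = 0 → F i = 1) →
        ∏ i : Fin d, F i = ∏ s : Fin t, F (e s) := by
      intro F hF
      rw [← Finset.prod_subset (Finset.subset_univ S) (fun i _ hi => hF i (hm0 i hi))]
      rw [← Finset.prod_attach S F]
      exact (Equiv.prod_comp e0 fun a : S => F a).symm
    have hcount : ∀ v : Fin t → Fin q,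
        ((Finset.univ.filter fun j : Fin N => (fun s => r j (e s)) = v).card : ℝ)
          = N / q ^ t := by
      intro v
      have h := hOA e v
      have heq : (Finset.univ.filter fun j : Fin N => (fun s => r j (e s)) = v)
          = (Finset.univ.filter fun j : Fin N => ∀ s, r j (e s) = v s) := by
        apply Finset.filter_congr
        intro j _
        simp [funext_iff]
      rw [heq, eq_div_iff (by positivity)]
      exact_mod_cast h
    calc (∑ j : Fin N, ∏ i : Fin d, z (r j i) ^ m i)
        = ∑ j : Fin N, ∏ s : Fin t, z (r j (e s)) ^ m (e s) := by
          refine Finset.sum_congr rfl fun j _ => ?_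
          exact hprodS (fun i => z (r j i) ^ m i) fun i hi => by show z (r j i) ^ m i = 1; rw [hi, pow_zero]
      _ = ∑ v : Fin t → Fin q,
            ∑ j ∈ Finset.univ.filter fun j : Fin N => (fun s => r j (e s)) = v,
              ∏ s : Fin t, z (v s) ^ m (e s) := by
          rw [Finset.sum_fiberwise' Finset.univ (fun j => fun s => r j (e s))
            (fun v => ∏ s : Fin t, z (v s) ^ m (e s))]
      _ = ∑ v : Fin t → Fin q, ((N : ℝ) / q ^ t) * ∏ s : Fin t, z (v s) ^ m (e s) := by
          refine Finset.sum_congr rfl fun v _ => ?_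
          rw [Finset.sum_const, nsmul_eq_mul, hcount v]
      _ = ((N : ℝ) / q ^ t) * ∑ v : Fin t → Fin q, ∏ s : Fin t, z (v s) ^ m (e s) := by
          rw [← Finset.mul_sum]
      _ = ((N : ℝ) / q ^ t) * ∏ s : Fin t, ∑ u : Fin q, z u ^ m (e s) := by
          rw [Finset.prod_univ_sum]
          simp [Fintype.piFinset_univ]
      _ = ((N : ℝ) / q ^ t) * ∏ s : Fin t, ((q : ℝ) * A (m (e s))) := by
          refine congrArg _ (Finset.prod_congr rfl fun s _ => ?_)
          exact hmom _ (hms _)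
      _ = N * ∏ i : Fin d, A (m i) := by
          rw [Finset.prod_mul_distrib, Finset.prod_const, Finset.card_univ, Fintype.card_fin]
          rw [hprodS (fun i => A (m i)) fun i hi => by show A (m i) = 1; rw [hi, hA0]]
          field_simp
  -- put everything together
  rw [show (fun x : Fin d → ℝ => MvPolynomial.eval x f *
        (Real.pi ^ (-(d : ℝ) / 2) * Real.exp (-∑ i, x i ^ 2)))
      = fun x : Fin d → ℝ => ∑ m ∈ f.support,
          MvPolynomial.coeff m f * ∏ i : Fin d, g (m i) (x i) from ?_]
  · rw [integral_finset_sum _ fun m _ =>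
      (Integrable.fintype_prod (f := fun i => g (m i)) fun i => hgint (m i)).const_mul _]
    have hRHS : ∀ m ∈ f.support,
        (∫ x : Fin d → ℝ, MvPolynomial.coeff m f * ∏ i : Fin d, g (m i) (x i))
          = MvPolynomial.coeff m f * ∏ i : Fin d, A (m i) := by
      intro m _
      rw [integral_const_mul, integral_fintype_prod_volume_eq_prod (f := fun i => g (m i))]
      congr 1
      exact Finset.prod_congr rfl fun i _ => hgA (m i)
    rw [Finset.sum_congr rfl hRHS]
    -- now the LHS
    simp_rw [MvPolynomial.eval_eq']
    rw [Finset.sum_comm]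
    rw [Finset.mul_sum]
    refine Finset.sum_congr rfl fun m hm => ?_
    rw [← Finset.mul_sum, ← mul_assoc, mul_comm (1 / (N:ℝ)), mul_assoc, key m hm]
    field_simp
  · funext x
    rw [MvPolynomial.eval_eq', Finset.sum_mul]
    refine Finset.sum_congr rfl fun m _ => ?_
    rw [hdens x, mul_assoc, ← Finset.prod_mul_distrib]
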